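/- Let A be a finite dimensional k-algebra and α : A⊗A → A* a Hochschild 2-cocycle such that the bilinear form (a,b) ↦ α(a⊗b)(1) − α(b⊗a)(1) vanishes on all commutators, i.e., there exists h ∈ A* with α(a⊗b)(1) − α(b⊗a)(1) + h(ab − ba) = 0 for all a,b ∈ A. Then T(A,α) is a symmetric algebra. -/

import Mathlib

namespace HochschildExtension

variable (k : Type*) [Field k] (A : Type*) [Ring A] [Algebra k A]

/-- The underlying vector space `A ⊕ A*` of the Hochschild extension `T(A,α)`. -/
abbrev Ext : Type _ := A × Module.Dual k A

/-- The Hochschild 2-cocycle condition for `α : A ⊗ A → A*`, written pointwise using the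
dual bimodule structure `(c·f·a)(b) = f(abc)`, i.e. `(a·g)(x) = g(xa)`, `(f·b)(x) = f(bx)`. -/
def IsCocycle (α : A →ₗ[k] A →ₗ[k] Module.Dual k A) : Prop :=
  ∀ a b d x : A, α b d (x * a) - α (a * b) d x + α a (b * d) x - α a b (d * x) = 0

/-- The multiplication of the Hochschild extension `T(A,α)`:
`(a,f)(b,g) = (ab, a·g + f·b + α(a⊗b))`, where `(a·g)(x) = g(xa)` and `(f·b)(x) = f(bx)`. -/
noncomputable def hmul (α : A →ₗ[k] A →ₗ[k] Module.Dual k A) (p q : Ext k A) : Ext k A :=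
  (p.1 * q.1,
    q.2 ∘ₗ LinearMap.mulRight k p.1 + p.2 ∘ₗ LinearMap.mulLeft k q.1 + α p.1 q.1)

/-- The identity element `(1, -α(1⊗1))` of the Hochschild extension `T(A,α)`. -/
noncomputable def hone (α : A →ₗ[k] A →ₗ[k] Module.Dual k A) : Ext k A :=
  (1, -(α 1 1))

/-- `T(A,α)` is a symmetric algebra: there is a `k`-linear bijection
`φ : T(A,α) → T(A,α)*` which is a morphism of `T(A,α)`-bimodules, where `T(A,α)*`
carries the canonical bimodule structure `(t·ξ·s)(u) = ξ(sut)`. -/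
noncomputable def IsSymmetric (α : A →ₗ[k] A →ₗ[k] Module.Dual k A) : Prop :=
  ∃ φ : Ext k A ≃ₗ[k] Module.Dual k (Ext k A),
    ∀ x y u : Ext k A,
      φ (hmul k A α x y) u = φ x (hmul k A α y u) ∧
      φ (hmul k A α y x) u = φ x (hmul k A α u y)

section Aux

variable (k : Type*) [Field k] (A : Type*) [Ring A] [Algebra k A]

/-- The trace-like functional `θ(a,f) = h(a) + f(1)`. -/
noncomputable def theta (h : Module.Dual k A) : Ext k A →ₗ[k] k :=
  h.comp (LinearMap.fst k A (Module.Dual k A)) +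
    (Module.Dual.eval k A 1).comp (LinearMap.snd k A (Module.Dual k A))

lemma theta_hmul (α : A →ₗ[k] A →ₗ[k] Module.Dual k A) (h : Module.Dual k A)
    (x y : Ext k A) :
    theta k A h (hmul k A α x y) = y.2 x.1 + x.2 y.1 + α x.1 y.1 1 + h (x.1 * y.1) := by
  simp only [theta, hmul, LinearMap.add_apply, LinearMap.comp_apply, LinearMap.fst_apply,
    LinearMap.snd_apply, Module.Dual.eval_apply, LinearMap.mulRight_apply,
    LinearMap.mulLeft_apply, one_mul, mul_one]
  ring

lemma theta_hmul_comm (α : A →ₗ[k] A →ₗ[k] Module.Dual k A) (h : Module.Dual k A)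
    (H : ∀ a b : A, α a b 1 - α b a 1 + h (a * b - b * a) = 0) (x y : Ext k A) :
    theta k A h (hmul k A α x y) = theta k A h (hmul k A α y x) := by
  have := H x.1 y.1
  rw [map_sub] at this
  rw [theta_hmul, theta_hmul]
  linear_combination this

lemma hmul_assoc (α : A →ₗ[k] A →ₗ[k] Module.Dual k A) (hα : IsCocycle k A α)
    (x y z : Ext k A) :
    hmul k A α (hmul k A α x y) z = hmul k A α x (hmul k A α y z) := by
  obtain ⟨a, f⟩ := x; obtain ⟨b, g⟩ := y; obtain ⟨d, e⟩ := z
  refine Prod.ext (mul_assoc a b d) ?_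
  apply LinearMap.ext; intro t
  have hc := hα a b d t
  simp only [hmul, LinearMap.add_apply, LinearMap.comp_apply, LinearMap.mulRight_apply,
    LinearMap.mulLeft_apply, LinearMap.add_apply]
  rw [mul_assoc t a b, mul_assoc d t a, mul_assoc b d t] at *
  linear_combination -hc

/-- The perturbation `β : A →ₗ A*`, `β(a)(b) = α a b 1 + h(ab)`. -/
noncomputable def betaMap (α : A →ₗ[k] A →ₗ[k] Module.Dual k A) (h : Module.Dual k A) :
    A →ₗ[k] Module.Dual k A :=
  α.compr₂ (Module.Dual.eval k A 1) + (LinearMap.mul k A).compr₂ h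

/-- The shear `(a, f) ↦ (a, f + β a)` as a linear equivalence. -/
noncomputable def shear (α : A →ₗ[k] A →ₗ[k] Module.Dual k A) (h : Module.Dual k A) :
    Ext k A ≃ₗ[k] Ext k A :=
  LinearEquiv.ofLinear
    (LinearMap.prod (LinearMap.fst k A (Module.Dual k A))
      (LinearMap.snd k A (Module.Dual k A) +
        (betaMap k A α h).comp (LinearMap.fst k A (Module.Dual k A))))
    (LinearMap.prod (LinearMap.fst k A (Module.Dual k A))
      (LinearMap.snd k A (Module.Dual k A) -
        (betaMap k A α h).comp (LinearMap.fst k A (Module.Dual k A))))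
    (by apply LinearMap.ext; rintro ⟨a, f⟩; simp)
    (by apply LinearMap.ext; rintro ⟨a, f⟩; simp)

variable [FiniteDimensional k A]

/-- The standard isomorphism `A × A* ≃ (A × A*)*`, `(a,f) ↦ ((b,g) ↦ f(b) + g(a))`. -/
noncomputable def stdEquiv : Ext k A ≃ₗ[k] Module.Dual k (Ext k A) :=
  ((LinearEquiv.prodComm k A (Module.Dual k A)).trans
    (LinearEquiv.prodCongr (LinearEquiv.refl k (Module.Dual k A)) (Module.evalEquiv k A))).trans
    (Module.dualProdDualEquivDual k A (Module.Dual k A))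

/-- The symmetrizing isomorphism. -/
noncomputable def phiEquiv (α : A →ₗ[k] A →ₗ[k] Module.Dual k A) (h : Module.Dual k A) :
    Ext k A ≃ₗ[k] Module.Dual k (Ext k A) :=
  (shear k A α h).trans (stdEquiv k A)

lemma phiEquiv_apply (α : A →ₗ[k] A →ₗ[k] Module.Dual k A) (h : Module.Dual k A)
    (x u : Ext k A) :
    phiEquiv k A α h x u = theta k A h (hmul k A α x u) := by
  obtain ⟨a, f⟩ := x; obtain ⟨b, g⟩ := u
  rw [theta_hmul]
  simp [phiEquiv, stdEquiv, shear, betaMap, Module.dualProdDualEquivDual,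
    Module.evalEquiv_apply, Module.Dual.eval_apply, LinearMap.mul_apply']
  ring

end Aux

/-- If there exists `h ∈ A*` with
`α(a⊗b)(1) − α(b⊗a)(1) + h(ab − ba) = 0` for all `a, b ∈ A` (the case `c = 1` of the
symmetry criterion), then `T(A,α)` is a symmetric algebra. -/
theorem symmetry_criterion_at_one
    (k : Type*) [Field k] (A : Type*) [Ring A] [Algebra k A] [FiniteDimensional k A]
    (α : A →ₗ[k] A →ₗ[k] Module.Dual k A) (hα : IsCocycle k A α)
    (h : Module.Dual k A)
    (H : ∀ a b : A, α a b 1 - α b a 1 + h (a * b - b * a) = 0) :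
    IsSymmetric k A α := by
  refine ⟨phiEquiv k A α h, fun x y u => ⟨?_, ?_⟩⟩
  · rw [phiEquiv_apply, phiEquiv_apply, hmul_assoc k A α hα]
  · rw [phiEquiv_apply, phiEquiv_apply,
      theta_hmul_comm k A α h H (hmul k A α y x) u, ← hmul_assoc k A α hα,
      theta_hmul_comm k A α h H (hmul k A α u y) x]

end HochschildExtension
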